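/- The minimum of z·ỹ over ỹ ∈ Bias_{l,Δ}(y) equals z·y − T, where T is the sum of the l largest values among the negative potential impacts ρ_i^- = max(−z_i δ_i^l, −z_i δ_i^u) = max over d ∈ [δ_i^l, δ_i^u] of (−z_i d). -/

import Mathlib

open Matrix Set Finset

/-- The bias set: label vectors differing from `y` in at most `l` coordinates,
with per-coordinate difference in `[δl i, δu i]`. -/
def Bias {n : ℕ} (y δl δu : Fin n → ℝ) (l : ℕ) : Set (Fin n → ℝ) :=
  {y' | (∀ i, y' i - y i ∈ Set.Icc (δl i) (δu i)) ∧
        (Finset.univ.filter (fun i => y' i ≠ y i)).card ≤ l}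

/-- Dot product of two vectors in `ℝ^n`. -/
def dotR {n : ℕ} (z v : Fin n → ℝ) : ℝ := ∑ i, z i * v i

/-- Sum of the `l` largest entries of `ρ`. -/
noncomputable def topSum {n : ℕ} (ρ : Fin n → ℝ) (l : ℕ) : ℝ :=
  (((List.ofFn ρ).mergeSort (· ≥ ·)).take l).sum

/-- preimage of a sub-multiset under map -/
lemma exists_preimage_multiset {α β : Type*} [DecidableEq α] [DecidableEq β]
    (f : α → β) (t : Multiset β) :
    ∀ (s : Multiset α), t ≤ s.map f → ∃ u, u ≤ s ∧ u.map f = t := by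
  induction t using Multiset.induction_on with
  | empty => exact fun s _ => ⟨0, zero_le, rfl⟩
  | cons a t ih =>
    intro s h
    have ha : a ∈ s.map f := Multiset.mem_of_le h (Multiset.mem_cons_self a t)
    obtain ⟨x, hx, hfx⟩ := Multiset.mem_map.mp ha
    have hs : s = x ::ₘ s.erase x := (Multiset.cons_erase hx).symm
    have ht : t ≤ (s.erase x).map f := by
      have h2 := Multiset.erase_le_erase a h
      rw [Multiset.erase_cons_head] at h2
      refine h2.trans ?_
      conv_lhs => rw [hs]
      rw [Multiset.map_cons, hfx, Multiset.erase_cons_head]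
    obtain ⟨u, hu, hmu⟩ := ih _ ht
    refine ⟨x ::ₘ u, ?_, by rw [Multiset.map_cons, hfx, hmu]⟩
    rw [hs]
    exact Multiset.cons_le_cons x hu

/-- sum of a sublist is at most sum of prefix of same length, for sorted lists -/
lemma sublist_sum_le_take {L' L : List ℝ} (h : List.Sublist L' L) (hs : L.Pairwise (· ≥ ·)) :
    L'.sum ≤ (L.take L'.length).sum := by
  induction h with
  | slnil => simp
  | @cons L' L a h ih =>
    have hs' : L.Pairwise (· ≥ ·) := hs.of_cons
    have hlen : L'.length ≤ L.length := h.length_le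
    match hk : L'.length with
    | 0 =>
      have : L' = [] := List.length_eq_zero_iff.mp hk
      simp [this]
    | m + 1 =>
      rw [List.take_succ_cons, List.sum_cons]
      have hmL : m < L.length := by omega
      have hsum : (L.take (m+1)).sum = (L.take m).sum + L[m] := by
        rw [← List.take_concat_get hmL, List.concat_eq_append, List.sum_append]
        simp
      have hmem : L[m] ∈ L := List.getElem_mem hmL
      have hga : a ≥ L[m] := (List.pairwise_cons.mp hs).1 _ hmem
      have h3 := ih hs'
      rw [hk, hsum] at h3
      linarith
  | @cons_cons L' L a h ih =>
    have hs' : L.Pairwise (· ≥ ·) := hs.of_cons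
    simpa using add_le_add_left (ih hs') a

lemma take_sum_mono {L : List ℝ} (hnn : ∀ x ∈ L, 0 ≤ x) {k l : ℕ} (h : k ≤ l) :
    (L.take k).sum ≤ (L.take l).sum := by
  have hl' : l = k + (l - k) := by omega
  rw [hl', List.take_add, List.sum_append]
  have : 0 ≤ (((L.drop k).take (l - k))).sum := by
    apply List.sum_nonneg
    intro x hx
    exact hnn x (List.mem_of_mem_drop (List.mem_of_mem_take hx))
  linarith

/-- The minimum of `z·ỹ` over the bias set equals `z·y` minus the sum of the
`l` largest negative potential impacts `ρ⁻ i = max (-(z i) * δl i) (-(z i) * δu i)`. -/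
theorem stmt4 {n : ℕ} (z y δl δu : Fin n → ℝ)
    (hl : ∀ i, δl i ≤ 0) (hu : ∀ i, 0 ≤ δu i) (l : ℕ) (hln : l ≤ n) :
    IsLeast ((fun y' => dotR z y') '' Bias y δl δu l)
      (dotR z y - topSum (fun i => max (-(z i) * δl i) (-(z i) * δu i)) l) := by
  classical
  set ρ : Fin n → ℝ := fun i => max (-(z i) * δl i) (-(z i) * δu i) with hρ
  have hρnn : ∀ i, 0 ≤ ρ i := by
    intro i
    rcases le_or_gt 0 (z i) with hz | hz
    · exact le_max_of_le_left (by nlinarith [hl i])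
    · exact le_max_of_le_right (by nlinarith [hu i])
  set L : List ℝ := (List.ofFn ρ).mergeSort (· ≥ ·) with hLdef
  have hLsorted : L.Pairwise (· ≥ ·) := by
    have h1 := List.pairwise_mergeSort (le := fun a b : ℝ => a ≥ b)
      (by intro a b c h1 h2; simp at *; linarith)
      (by intro a b; simpa using le_total b a) (List.ofFn ρ)
    simpa [List.Pairwise] using h1
  have hLperm : L.Perm (List.ofFn ρ) := List.mergeSort_perm _ _
  have hcoe : (↑L : Multiset ℝ) = Multiset.map ρ Finset.univ.val := by
    have h1 : (Finset.univ : Finset (Fin n)).val = ↑(List.finRange n) := by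
      rw [Fin.univ_def]
    rw [h1, Multiset.map_coe, ← List.ofFn_eq_map, Multiset.coe_eq_coe]
    exact hLperm
  have hLnn : ∀ x ∈ L, 0 ≤ x := by
    intro x hx
    have hx' : x ∈ Multiset.map ρ Finset.univ.val := by rw [← hcoe]; exact hx
    obtain ⟨i, _, rfl⟩ := Multiset.mem_map.mp hx'
    exact hρnn i
  -- key upper bound: any finset S with card ≤ l has ∑ ρ ≤ topSum
  have hts : topSum ρ l = (L.take l).sum := rfl
  have key : ∀ (S : Finset (Fin n)), S.card ≤ l → ∑ i ∈ S, ρ i ≤ topSum ρ l := by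
    intro S hS
    have hle : Multiset.map ρ S.val ≤ (↑L : Multiset ℝ) := by
      rw [hcoe]
      exact Multiset.map_le_map (Finset.val_le_iff.mpr (Finset.subset_univ S))
    set A : List ℝ := (Multiset.map ρ S.val).toList with hA
    have hAcoe : (↑A : Multiset ℝ) = Multiset.map ρ S.val := Multiset.coe_toList _
    have hsp : List.Subperm A L := by
      rw [← Multiset.coe_le, hAcoe]; exact hle
    obtain ⟨L', hperm, hsub⟩ := hsp
    have hsum : L'.sum = ∑ i ∈ S, ρ i := by
      rw [hperm.sum_eq]
      have : (↑A : Multiset ℝ).sum = A.sum := rfl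
      rw [← this, hAcoe]
      rw [Finset.sum_eq_multiset_sum]
    have hlen : L'.length ≤ l := by
      rw [hperm.length_eq]
      have : A.length = S.card := by
        have := congrArg Multiset.card hAcoe
        simpa using this
      omega
    calc ∑ i ∈ S, ρ i = L'.sum := hsum.symm
      _ ≤ (L.take L'.length).sum := sublist_sum_le_take hsub hLsorted
      _ ≤ (L.take l).sum := take_sum_mono hLnn hlen
      _ = topSum ρ l := rfl
  -- existence of achieving finset
  obtain ⟨u, hule, hmu⟩ : ∃ u, u ≤ Finset.univ.val ∧ u.map ρ = (↑(L.take l) : Multiset ℝ) := by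
    apply exists_preimage_multiset
    rw [← hcoe]
    exact Multiset.coe_le.mpr (List.take_sublist l L).subperm
  have hunodup : u.Nodup := Multiset.nodup_of_le hule Finset.univ.nodup
  set S : Finset (Fin n) := ⟨u, hunodup⟩ with hSdef
  have hScard : S.card ≤ l := by
    have h1 : u.card = (L.take l).length := by
      have := congrArg Multiset.card hmu
      simpa using this
    have : (L.take l).length ≤ l := by simp [List.length_take]
    simp only [Finset.card, hSdef]
    omega
  have hSsum : ∑ i ∈ S, ρ i = topSum ρ l := by
    rw [Finset.sum_eq_multiset_sum]
    show (Multiset.map ρ u).sum = _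
    rw [hmu, hts]
    rfl
  -- the witness
  set d : Fin n → ℝ := fun i => if -(z i) * δl i ≥ -(z i) * δu i then δl i else δu i with hd
  have hdρ : ∀ i, -(z i) * d i = ρ i := by
    intro i
    by_cases hc : -(z i) * δl i ≥ -(z i) * δu i
    · simp only [hd, if_pos hc, hρ]
      rw [max_eq_left hc]
    · simp only [hd, if_neg hc, hρ]
      rw [max_eq_right (le_of_not_ge hc)]
  have hdIcc : ∀ i, d i ∈ Set.Icc (δl i) (δu i) := by
    intro i
    by_cases hc : -(z i) * δl i ≥ -(z i) * δu i
    · simp only [hd, if_pos hc]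
      exact ⟨le_refl _, le_trans (hl i) (hu i)⟩
    · simp only [hd, if_neg hc]
      exact ⟨le_trans (hl i) (hu i), le_refl _⟩
  set y' : Fin n → ℝ := fun i => if i ∈ S then y i + d i else y i with hy'
  constructor
  · -- membership
    refine ⟨y', ⟨?_, ?_⟩, ?_⟩
    · intro i
      by_cases hiS : i ∈ S
      · simp only [hy', if_pos hiS]
        simpa using hdIcc i
      · simp only [hy', if_neg hiS]
        simpa using ⟨hl i, hu i⟩
    · refine le_trans (Finset.card_le_card ?_) hScard
      intro i hi
      simp only [Finset.mem_filter, Finset.mem_univ, true_and] at hi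
      by_contra hiS
      apply hi
      simp [hy', if_neg hiS]
    · show dotR z y' = _
      have hsplit : dotR z y' - dotR z y = ∑ i ∈ S, (-(ρ i)) := by
        simp only [dotR]
        rw [← Finset.sum_sub_distrib]
        rw [← Finset.sum_subset (Finset.subset_univ S)
          (f := fun i => z i * y' i - z i * y i)
          (fun i _ hiS => by simp [hy', if_neg hiS])]
        apply Finset.sum_congr rfl
        intro i hi
        simp only [hy', if_pos hi]
        rw [← hdρ i]; ring
      rw [Finset.sum_neg_distrib, hSsum] at hsplit
      linarith
  · -- lower bound
    rintro v ⟨y'', ⟨hIcc, hcard⟩, rfl⟩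
    set T := Finset.univ.filter (fun i => y'' i ≠ y i) with hT
    have hdiff : dotR z y'' - dotR z y = ∑ i ∈ T, z i * (y'' i - y i) := by
      simp only [dotR]
      rw [← Finset.sum_sub_distrib]
      rw [← Finset.sum_subset (Finset.subset_univ T)
        (f := fun i => z i * y'' i - z i * y i)
        (fun i _ hiT => by
          have hyi : y'' i = y i := by
            by_contra hne
            exact hiT (by simp [hT, hne])
          simp [hyi])]
      exact Finset.sum_congr rfl (fun i _ => by ring)
    have hbnd : ∀ i ∈ T, -(ρ i) ≤ z i * (y'' i - y i) := by
      intro i _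
      obtain ⟨h1, h2⟩ := hIcc i
      have hρi : ρ i = max (-(z i) * δl i) (-(z i) * δu i) := by rw [hρ]
      have hml : -(z i) * δl i ≤ max (-(z i) * δl i) (-(z i) * δu i) := le_max_left _ _
      have hmr : -(z i) * δu i ≤ max (-(z i) * δl i) (-(z i) * δu i) := le_max_right _ _
      rcases le_or_gt 0 (z i) with hz | hz
      · have h9 : -(z i) * (y'' i - y i) ≤ -(z i) * δl i := by nlinarith
        linarith
      · have h9 : -(z i) * (y'' i - y i) ≤ -(z i) * δu i := by nlinarith
        linarith
    have h5 : -(∑ i ∈ T, ρ i) ≤ ∑ i ∈ T, z i * (y'' i - y i) := by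
      rw [← Finset.sum_neg_distrib]
      exact Finset.sum_le_sum hbnd
    have h6 := key T hcard
    have := hdiff
    linarith
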